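/- In the Euclidean plane ℝ², let Y = ℝ² \ ((0,1) × (−1,1)) be the complement of the open rectangle {(x,y) : 0 < x < 1, −1 < y < 1}, equipped with the restriction of the Euclidean metric. Then the open ball {p ∈ Y : ‖p‖ < 1.01} of radius 1.01 centered at the origin (0,0) ∈ Y is not a connected subset of Y. -/

import Mathlib

/-- In the plane with the open rectangle `(0,1) × (-1,1)` removed (with the
subspace metric), the open ball of radius `1.01` around the origin is not
connected. -/
theorem ball_not_connected_in_plane_minus_rectangle :
    ¬ IsConnected
      {q : {p : EuclideanSpace ℝ (Fin 2) |
              ¬ (0 < p 0 ∧ p 0 < 1 ∧ -1 < p 1 ∧ p 1 < 1)} |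
        ‖(q : EuclideanSpace ℝ (Fin 2))‖ < 1.01} := by
  set Y := {p : EuclideanSpace ℝ (Fin 2) |
              ¬ (0 < p 0 ∧ p 0 < 1 ∧ -1 < p 1 ∧ p 1 < 1)}
  intro h
  have hcont : Continuous fun q : Y => (q : EuclideanSpace ℝ (Fin 2)) 0 :=
    (continuous_apply 0).comp ((PiLp.continuous_ofLp 2 _).comp continuous_subtype_val)
  have hU : IsOpen {q : Y | (q : EuclideanSpace ℝ (Fin 2)) 0 < 1/2} :=
    isOpen_lt hcont continuous_const
  have hV : IsOpen {q : Y | (1:ℝ)/2 < (q : EuclideanSpace ℝ (Fin 2)) 0} :=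
    isOpen_lt continuous_const hcont
  -- origin
  have h0 : (0 : EuclideanSpace ℝ (Fin 2)) ∈ Y := by
    simp [Y]
  -- the point (1,0)
  have h1 : (EuclideanSpace.single 0 (1:ℝ)) ∈ Y := by
    intro hx
    simp [EuclideanSpace.single_apply] at hx
  have key := h.isPreconnected _ _ hU hV ?_ ?_ ?_
  · obtain ⟨q, _, hq1, hq2⟩ := key
    simp only [Set.mem_setOf_eq] at hq1 hq2
    linarith
  · -- the ball is covered
    rintro ⟨q, hq⟩ hball
    by_contra hc
    simp only [Set.mem_union, Set.mem_setOf_eq, not_or, not_lt] at hc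
    obtain ⟨hge, hle⟩ := hc
    have hx : q 0 = 1/2 := le_antisymm hle hge
    have hnorm : ‖q‖ < 1.01 := hball
    have hy : q 1 ≤ -1 ∨ 1 ≤ q 1 := by
      by_contra hy
      push_neg at hy
      exact hq ⟨by rw [hx]; norm_num, by rw [hx]; norm_num, hy.1, hy.2⟩
    have hy2 : 1 ≤ (q 1)^2 := by
      rcases hy with hy | hy <;> nlinarith
    have hq2 : ‖q‖^2 = (q 0)^2 + (q 1)^2 := by
      rw [EuclideanSpace.norm_eq]
      rw [Real.sq_sqrt (by positivity)]
      simp [Fin.sum_univ_two, sq_abs]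
    nlinarith [norm_nonneg q]
  · exact ⟨⟨0, h0⟩, by simp; norm_num, by simp⟩
  · refine ⟨⟨EuclideanSpace.single 0 (1:ℝ), h1⟩, ?_, ?_⟩
    · show ‖EuclideanSpace.single 0 (1:ℝ)‖ < 1.01
      rw [EuclideanSpace.norm_single]
      norm_num
    · show (1:ℝ)/2 < (EuclideanSpace.single 0 (1:ℝ)) 0
      simp [EuclideanSpace.single_apply]
      norm_num
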